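/- Fix n ≥ 1, continuously differentiable per-batch losses E_0, …, E_{n−1} : ℝ^D → ℝ, θ₀ ∈ ℝ^D, h > 0, and θ ∈ ℝ^D. For a permutation σ of {0, …, n−1} define the shuffled modified loss Ẽ_σ(θ) = Ē(θ) + (n h / 4) ‖∇Ē(θ)‖² − (h/n) Σ_{μ=1}^{n−1} ⟨∇E_{σ(μ)}(θ), Σ_{τ=0}^{μ−1} ∇E_{σ(τ)}(θ₀)⟩, where Ē = (1/n) Σ_{k=0}^{n−1} E_k. Then the expectation over a uniformly random permutation σ equals (1/n!) Σ_{σ ∈ S_n} Ẽ_σ(θ) = Ē(θ) + (n h / 4) ‖∇Ē(θ)‖² − (h / (2n)) ( Σ_{k=0}^{n−1} Σ_{i=0}^{n−1} ⟨∇E_k(θ), ∇E_i(θ₀)⟩ − Σ_{k=0}^{n−1} ⟨∇E_k(θ), ∇E_k(θ₀)⟩ ). -/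

import Mathlib

open scoped RealInnerProductSpace

/-- The average loss `Ē = (1/n) ∑ E_k` for losses indexed by `Fin n`. -/
noncomputable def avgLossFin {D n : ℕ} (E : Fin n → EuclideanSpace ℝ (Fin D) → ℝ)
    (θ : EuclideanSpace ℝ (Fin D)) : ℝ :=
  (1 / (n : ℝ)) * ∑ k : Fin n, E k θ

/-- The modified loss for `n` SGD steps when the batches are presented in the
order `σ(0), …, σ(n−1)` (the `μ = 0` term of the order-dependent sum vanishes,
so we may sum over all `μ`). -/
noncomputable def shuffledModLoss {D n : ℕ} (E : Fin n → EuclideanSpace ℝ (Fin D) → ℝ)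
    (θ₀ : EuclideanSpace ℝ (Fin D)) (h : ℝ) (σ : Equiv.Perm (Fin n))
    (θ : EuclideanSpace ℝ (Fin D)) : ℝ :=
  avgLossFin E θ + ((n : ℝ) * h / 4) * ‖gradient (avgLossFin E) θ‖ ^ 2
    - (h / (n : ℝ)) * ∑ μ : Fin n,
        ⟪gradient (E (σ μ)) θ, ∑ τ ∈ Finset.Iio μ, gradient (E (σ τ)) θ₀⟫

/-- Half of the strictly-lower-triangular sum of a symmetric-off-diagonal matrix. -/
private theorem offdiag_half {n : ℕ} (c : Fin n → Fin n → ℝ)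
    (hsymm : ∀ μ τ : Fin n, μ ≠ τ → c μ τ = c τ μ) :
    2 * ∑ μ : Fin n, ∑ τ ∈ Finset.Iio μ, c μ τ
      = (∑ μ : Fin n, ∑ τ : Fin n, c μ τ) - ∑ μ : Fin n, c μ μ := by
  have hsplit : ∀ μ : Fin n, ∑ τ : Fin n, c μ τ
      = (∑ τ ∈ Finset.Ioi μ, c μ τ + ∑ τ ∈ Finset.Iio μ, c μ τ) + c μ μ := by
    intro μ
    have e3 : (Finset.Ioi μ).disjUnion (Finset.Iio μ) (Finset.disjoint_Ioi_Iio μ)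
        = Finset.univ.erase μ := by
      ext τ; simp [ne_comm, lt_or_lt_iff_ne]
    rw [← Finset.sum_disjUnion (Finset.disjoint_Ioi_Iio μ), e3]
    exact (Finset.sum_erase_add _ _ (Finset.mem_univ μ)).symm
  have hIoi : ∑ μ : Fin n, ∑ τ ∈ Finset.Ioi μ, c μ τ
      = ∑ μ : Fin n, ∑ τ ∈ Finset.Iio μ, c μ τ := by
    have e1 : ∀ μ : Fin n, Finset.Ioi μ = Finset.univ.filter (fun τ => μ < τ) := by
      intro μ; ext τ; simp
    have e2 : ∀ τ : Fin n, Finset.Iio τ = Finset.univ.filter (fun μ => μ < τ) := by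
      intro τ; ext μ; simp
    calc ∑ μ : Fin n, ∑ τ ∈ Finset.Ioi μ, c μ τ
        = ∑ μ : Fin n, ∑ τ : Fin n, if μ < τ then c μ τ else 0 := by
          simp only [e1, Finset.sum_filter]
      _ = ∑ τ : Fin n, ∑ μ : Fin n, if μ < τ then c μ τ else 0 := Finset.sum_comm
      _ = ∑ τ : Fin n, ∑ μ ∈ Finset.Iio τ, c μ τ := by
          simp only [e2, Finset.sum_filter]
      _ = ∑ τ : Fin n, ∑ μ ∈ Finset.Iio τ, c τ μ := by
          apply Finset.sum_congr rfl; intro τ _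
          apply Finset.sum_congr rfl; intro μ hμ
          exact hsymm μ τ (ne_of_lt (Finset.mem_Iio.mp hμ))
  simp only [hsplit]
  rw [Finset.sum_add_distrib, Finset.sum_add_distrib, hIoi]; ring

/-- The expectation over a uniformly random permutation of the batches of the
shuffled modified loss. -/
theorem expectation_shuffled_modified_loss {D n : ℕ} (hn : 1 ≤ n)
    (E : Fin n → EuclideanSpace ℝ (Fin D) → ℝ)
    (hE : ∀ k, ContDiff ℝ 1 (E k))
    (θ₀ : EuclideanSpace ℝ (Fin D)) (h : ℝ) (hh : 0 < h)
    (θ : EuclideanSpace ℝ (Fin D)) :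
    (1 / (n.factorial : ℝ)) * ∑ σ : Equiv.Perm (Fin n), shuffledModLoss E θ₀ h σ θ
      = avgLossFin E θ + ((n : ℝ) * h / 4) * ‖gradient (avgLossFin E) θ‖ ^ 2
        - (h / (2 * (n : ℝ))) *
            ((∑ k : Fin n, ∑ i : Fin n, ⟪gradient (E k) θ, gradient (E i) θ₀⟫)
              - ∑ k : Fin n, ⟪gradient (E k) θ, gradient (E k) θ₀⟫) := by
  have hfac : (n.factorial : ℝ) ≠ 0 := Nat.cast_ne_zero.mpr (Nat.factorial_ne_zero n)
  set f : Fin n → Fin n → ℝ :=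
    fun k i => ⟪gradient (E k) θ, gradient (E i) θ₀⟫ with hf
  set A : ℝ := avgLossFin E θ + ((n : ℝ) * h / 4) * ‖gradient (avgLossFin E) θ‖ ^ 2 with hA
  have hexp : ∀ σ : Equiv.Perm (Fin n), shuffledModLoss E θ₀ h σ θ
      = A - (h / (n : ℝ)) * ∑ μ : Fin n, ∑ τ ∈ Finset.Iio μ, f (σ μ) (σ τ) := by
    intro σ
    rw [shuffledModLoss]
    congr 2
    exact Finset.sum_congr rfl fun μ _ => inner_sum _ _ _
  set c : Fin n → Fin n → ℝ := fun μ τ => ∑ σ : Equiv.Perm (Fin n), f (σ μ) (σ τ) with hc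
  have csymm : ∀ μ τ : Fin n, μ ≠ τ → c μ τ = c τ μ := by
    intro μ τ _
    refine Fintype.sum_equiv (Equiv.mulRight (Equiv.swap μ τ))
      (fun σ => f (σ μ) (σ τ)) (fun σ => f (σ τ) (σ μ)) ?_
    intro σ
    simp [Equiv.Perm.mul_apply, Equiv.swap_apply_left, Equiv.swap_apply_right]
  have hcard : (Finset.univ : Finset (Equiv.Perm (Fin n))).card = n.factorial := by
    rw [Finset.card_univ, Fintype.card_perm, Fintype.card_fin]
  have csum : ∑ μ : Fin n, ∑ τ : Fin n, c μ τ
      = (n.factorial : ℝ) * ∑ k : Fin n, ∑ i : Fin n, f k i := by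
    have hσ : ∀ σ : Equiv.Perm (Fin n),
        ∑ μ : Fin n, ∑ τ : Fin n, f (σ μ) (σ τ) = ∑ k : Fin n, ∑ i : Fin n, f k i := by
      intro σ
      rw [← Equiv.sum_comp σ (fun k => ∑ i : Fin n, f k i)]
      exact Finset.sum_congr rfl fun μ _ => (Equiv.sum_comp σ (fun i => f (σ μ) i))
    have hswap1 : ∀ μ : Fin n, ∑ τ : Fin n, c μ τ
        = ∑ σ : Equiv.Perm (Fin n), ∑ τ : Fin n, f (σ μ) (σ τ) := fun μ => Finset.sum_comm
    simp only [hswap1]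
    rw [Finset.sum_comm]
    simp only [hσ]
    rw [Finset.sum_const, hcard, nsmul_eq_mul]
  have cdiag : ∑ μ : Fin n, c μ μ = (n.factorial : ℝ) * ∑ k : Fin n, f k k := by
    rw [Finset.sum_comm]
    have hσ : ∀ σ : Equiv.Perm (Fin n),
        ∑ μ : Fin n, f (σ μ) (σ μ) = ∑ k : Fin n, f k k := fun σ =>
      Equiv.sum_comp σ (fun k => f k k)
    simp only [hσ]
    rw [Finset.sum_const, hcard, nsmul_eq_mul]
  have hswap : ∑ σ : Equiv.Perm (Fin n), ∑ μ : Fin n, ∑ τ ∈ Finset.Iio μ, f (σ μ) (σ τ)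
      = ∑ μ : Fin n, ∑ τ ∈ Finset.Iio μ, c μ τ := by
    rw [Finset.sum_comm]
    exact Finset.sum_congr rfl fun μ _ => Finset.sum_comm
  have half := offdiag_half c csymm
  rw [csum, cdiag] at half
  simp only [hexp]
  rw [Finset.sum_sub_distrib, Finset.sum_const, hcard, ← Finset.mul_sum, hswap]
  have hkey : ∑ μ : Fin n, ∑ τ ∈ Finset.Iio μ, c μ τ
      = ((n.factorial : ℝ) * ∑ k : Fin n, ∑ i : Fin n, f k i
        - (n.factorial : ℝ) * ∑ k : Fin n, f k k) / 2 := by linarith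
  rw [hkey, nsmul_eq_mul]
  have hn0 : (n : ℝ) ≠ 0 := Nat.cast_ne_zero.mpr (by omega)
  have alg : ∀ A' S Sd : ℝ,
      (1 / (n.factorial : ℝ)) * ((n.factorial : ℝ) * A'
        - (h / (n : ℝ)) * (((n.factorial : ℝ) * S - (n.factorial : ℝ) * Sd) / 2))
      = A' - (h / (2 * (n : ℝ))) * (S - Sd) := by
    intro A' S Sd
    field_simp
  exact alg A (∑ k : Fin n, ∑ i : Fin n, f k i) (∑ k : Fin n, f k k)
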